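/- Horizontal visibility graphs are outerplanar in the following noncrossing sense: if i < j and p < q are two edges of HVG(x) with i < p, then it is impossible that i < p < j < q (edges drawn as arcs above the line never cross). -/

import Mathlib

/-- The horizontal visibility graph of a sequence `x : Fin N → ℝ`:
`a < b` are adjacent iff `x k < min (x a) (x b)` for all `a < k < b`. -/
def HVG {N : ℕ} (x : Fin N → ℝ) : SimpleGraph (Fin N) where
  Adj a b := (a < b ∧ ∀ k, a < k → k < b → x k < min (x a) (x b)) ∨
             (b < a ∧ ∀ k, b < k → k < a → x k < min (x b) (x a))
  symm := ⟨by intro a b h; tauto⟩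
  loopless := ⟨by intro a h; rcases h with ⟨h, -⟩ | ⟨h, -⟩ <;> exact lt_irrefl a h⟩

/-- Degree of a vertex in the HVG. -/
noncomputable def hvgDegree {N : ℕ} (x : Fin N → ℝ) (v : Fin N) : ℕ :=
  Nat.card {w : Fin N // (HVG x).Adj v w}

theorem hvg_noncrossing {N : ℕ} (x : Fin N → ℝ)
    (i j p q : Fin N) (hij : i < j) (hpq : p < q) (hip : i < p)
    (h1 : (HVG x).Adj i j) (h2 : (HVG x).Adj p q) :
    ¬(p < j ∧ j < q) := by
  rintro ⟨hpj, hjq⟩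
  rcases h1 with ⟨-, H1⟩ | ⟨h, -⟩
  · rcases h2 with ⟨-, H2⟩ | ⟨h, -⟩
    · have hp := H1 p hip hpj
      have hj := H2 j hpj hjq
      have := lt_trans (lt_of_lt_of_le hp (min_le_right _ _))
        (lt_of_lt_of_le hj (min_le_left _ _))
      exact lt_irrefl _ this
    · exact absurd hpq (not_lt.2 h.le)
  · exact absurd hij (not_lt.2 h.le)
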